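/- Let φ be a positive-definite Hermitian d×d complex matrix with tr(φ) = 1, and let Π be a nonzero Hermitian projector (Π² = Π, Π ≠ 0). Let H be the Hermitian matrix with exp(H) = d·φ and set ℓ := ‖H‖_F = √(tr(H²)). Then exp(ℓ) · d · tr(Π φ) ≥ 1 (the trace is real). -/

import Mathlib

open Matrix NormedSpace
open scoped ComplexOrder

lemma trace_nonneg_of_psd {n : Type*} [Fintype n] [DecidableEq n]
    {A : Matrix n n ℂ} (hA : A.PosSemidef) : 0 ≤ A.trace := by
  rw [Matrix.trace]
  refine Finset.sum_nonneg fun i _ => ?_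
  have := hA.dotProduct_mulVec_nonneg (Pi.single i 1)
  simpa [Matrix.mulVec_single, dotProduct, Pi.single_apply, Finset.sum_ite_eq] using this

lemma trace_mul_psd_nonneg {n : Type*} [Fintype n] [DecidableEq n]
    {A B : Matrix n n ℂ} (hA : A.PosSemidef) (hB : B.PosSemidef) :
    0 ≤ (A * B).trace := by
  obtain ⟨C, hC⟩ : ∃ C : Matrix n n ℂ, B = Cᴴ * C :=
    by open scoped MatrixOrder in exact CStarAlgebra.nonneg_iff_eq_star_mul_self.mp hB.nonneg
  have : (A * B).trace = (C * A * Cᴴ).trace := by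
    rw [hC, ← Matrix.mul_assoc, Matrix.trace_mul_cycle, Matrix.mul_assoc]
  rw [this]
  exact trace_nonneg_of_psd (hA.mul_mul_conjTranspose_same C)

lemma conj_cancel {n : Type*} [Fintype n] [DecidableEq n] {V X Y : Matrix n n ℂ}
    (hVV' : star V * V = 1) (h : V * X * star V = V * Y * star V) : X = Y := by
  have h2 := congrArg (fun M => star V * M * V) h
  simp only [Matrix.mul_assoc] at h2
  calc X = star V * V * X * (star V * V) := by rw [hVV']; simp
    _ = star V * V * Y * (star V * V) := by
        simp only [Matrix.mul_assoc]; rw [h2]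
    _ = Y := by rw [hVV']; simp


/-- **Quantum complexity–error trade-off, core inequality.**
Let `φ` be a positive-definite density matrix (the channel output `Λ(𝟙/d)`),
`Pr ≠ 0` a Hermitian projector, and `H = log(dφ)` the Hermitian logarithm of `dφ`,
with `ℓ = ‖H‖_F = √(tr H²)`.  Then `e^ℓ · d · tr(Pr φ) ≥ 1`. -/
theorem quantum_tradeoff_core
    (d : ℕ) (φ : Matrix (Fin d) (Fin d) ℂ)
    (hφ : φ.PosDef) (hφtr : φ.trace = 1)
    (Pr : Matrix (Fin d) (Fin d) ℂ)
    (hPrherm : Pr.IsHermitian) (hPrproj : Pr * Pr = Pr) (hPrne : Pr ≠ 0)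
    (H : Matrix (Fin d) (Fin d) ℂ) (hH : H.IsHermitian)
    (hHlog : exp H = (d : ℂ) • φ) :
    Real.exp (Real.sqrt ((Matrix.trace (H * H)).re)) * d *
      (Matrix.trace (Pr * φ)).re ≥ 1 := by
  classical
  -- eigendecomposition of H
  set U : Matrix (Fin d) (Fin d) ℂ := (hH.eigenvectorUnitary : Matrix (Fin d) (Fin d) ℂ) with hU
  have hUU : U * star U = 1 := Matrix.mem_unitaryGroup_iff.mp hH.eigenvectorUnitary.2
  have hUU' : star U * U = 1 := Matrix.mem_unitaryGroup_iff'.mp hH.eigenvectorUnitary.2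
  have hUinv : U⁻¹ = star U := Matrix.inv_eq_right_inv hUU
  set ν : Fin d → ℝ := hH.eigenvalues with hν
  have hspec : H = U * Matrix.diagonal (fun i => (ν i : ℂ)) * star U := by
    simpa [Function.comp_def, Unitary.conjStarAlgAut_apply] using hH.spectral_theorem
  have hexp : exp H = U * Matrix.diagonal (fun i => (Real.exp (ν i) : ℂ)) * star U := by
    rw [hspec, ← hUinv, Matrix.exp_conj U _ (isUnit_iff_exists.mpr ⟨star U, hUU, hUU'⟩),
      Matrix.exp_diagonal, Pi.exp_def]
    simp [← Complex.exp_eq_exp_ℂ, Complex.ofReal_exp]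
  -- trace (H*H) = ∑ ν i ^ 2
  have htrHH : (Matrix.trace (H * H)).re = ∑ i, ν i ^ 2 := by
    have : H * H = U * Matrix.diagonal (fun i => ((ν i : ℂ) * ν i)) * star U := by
      rw [hspec]
      calc U * Matrix.diagonal (fun i => (ν i : ℂ)) * star U *
            (U * Matrix.diagonal (fun i => (ν i : ℂ)) * star U)
          = U * Matrix.diagonal (fun i => (ν i : ℂ)) * (star U * U) *
            Matrix.diagonal (fun i => (ν i : ℂ)) * star U := by
            simp only [Matrix.mul_assoc]
        _ = U * (Matrix.diagonal (fun i => (ν i : ℂ)) *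
            Matrix.diagonal (fun i => (ν i : ℂ))) * star U := by
            rw [hUU']; simp only [Matrix.mul_one, Matrix.mul_assoc]
        _ = _ := by rw [Matrix.diagonal_mul_diagonal]
    rw [this, Matrix.trace_mul_cycle, hUU', Matrix.one_mul, Matrix.trace_diagonal]
    simp [pow_two]
  set ℓ : ℝ := Real.sqrt ((Matrix.trace (H * H)).re) with hℓ
  have hl0 : (0:ℝ) ≤ ℓ := Real.sqrt_nonneg _
  have hsumnn : (0:ℝ) ≤ ∑ i, ν i ^ 2 := Finset.sum_nonneg fun i _ => sq_nonneg _
  have hℓsq : ℓ ^ 2 = ∑ i, ν i ^ 2 := by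
    rw [hℓ, htrHH, Real.sq_sqrt hsumnn]
  have hνge : ∀ i, -ℓ ≤ ν i := by
    intro i
    have h1 : ν i ^ 2 ≤ ℓ ^ 2 := by
      rw [hℓsq]
      exact Finset.single_le_sum (fun j _ => sq_nonneg (ν j)) (Finset.mem_univ i)
    nlinarith [sq_nonneg (ν i + ℓ)]
  -- M := d•φ - e^{-ℓ}•1 is PSD
  set c : ℝ := Real.exp (-ℓ) with hc
  have hM : ((d:ℂ) • φ - (c : ℂ) • 1).PosSemidef := by
    have heq : (d:ℂ) • φ - (c : ℂ) • 1
        = U * Matrix.diagonal (fun i => ((Real.exp (ν i) - c : ℝ) : ℂ)) * star U := by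
      rw [← hHlog, hexp]
      have h1 : ((c : ℂ)) • (1 : Matrix (Fin d) (Fin d) ℂ)
          = U * Matrix.diagonal (fun _ => (c : ℂ)) * star U := by
        rw [← Matrix.smul_one_eq_diagonal]
        rw [Matrix.mul_smul, Matrix.smul_mul, Matrix.mul_one, hUU]
      rw [h1, ← Matrix.sub_mul, ← Matrix.mul_sub]
      congr 2
      rw [Matrix.diagonal_sub]
      congr 1
      ext i : 1
      push_cast
      ring
    rw [heq]
    have hps := (Matrix.posSemidef_diagonal_iff.mpr
      (fun i => ?_ : ∀ i, (0:ℂ) ≤ ((Real.exp (ν i) - c : ℝ) : ℂ))).mul_mul_conjTranspose_same U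
    · simpa [Matrix.star_eq_conjTranspose] using hps
    · rw [Complex.zero_le_real, sub_nonneg, hc]
      exact Real.exp_le_exp.mpr (hνge i)
  -- Pr is PSD
  have hPrpsd : Pr.PosSemidef := by
    have : Pr = Prᴴ * Pr := by rw [hPrherm.eq, hPrproj]
    exact this ▸ Matrix.posSemidef_conjTranspose_mul_self Pr
  have key : 0 ≤ (Pr * ((d:ℂ) • φ - (c : ℂ) • 1)).trace := trace_mul_psd_nonneg hPrpsd hM
  -- trace Pr ≥ 1
  have htrPr : (1:ℝ) ≤ (Matrix.trace Pr).re := by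
    set V : Matrix (Fin d) (Fin d) ℂ :=
      (hPrherm.eigenvectorUnitary : Matrix (Fin d) (Fin d) ℂ) with hV
    have hVV : V * star V = 1 := Matrix.mem_unitaryGroup_iff.mp hPrherm.eigenvectorUnitary.2
    have hVV' : star V * V = 1 := Matrix.mem_unitaryGroup_iff'.mp hPrherm.eigenvectorUnitary.2
    set μ : Fin d → ℝ := hPrherm.eigenvalues with hμ
    have hPspec : Pr = V * Matrix.diagonal (fun i => (μ i : ℂ)) * star V := by
      simpa [Function.comp_def, Unitary.conjStarAlgAut_apply] using hPrherm.spectral_theorem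
    have hDD : Matrix.diagonal (fun i => (μ i : ℂ)) * Matrix.diagonal (fun i => (μ i : ℂ))
        = Matrix.diagonal (fun i => (μ i : ℂ)) := by
      refine conj_cancel hVV' ?_
      have h := hPrproj
      rw [hPspec] at h
      calc V * (Matrix.diagonal (fun i => (μ i : ℂ)) * Matrix.diagonal (fun i => (μ i : ℂ)))
            * star V
          = V * Matrix.diagonal (fun i => (μ i : ℂ)) * (star V * V)
            * Matrix.diagonal (fun i => (μ i : ℂ)) * star V := by
            rw [hVV']; simp only [Matrix.mul_one, Matrix.mul_assoc]
        _ = V * Matrix.diagonal (fun i => (μ i : ℂ)) * star V := by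
            simp only [Matrix.mul_assoc] at h ⊢; rw [h]
    have hμ01 : ∀ i, μ i = 0 ∨ μ i = 1 := by
      intro i
      have hDD' := hDD
      rw [Matrix.diagonal_mul_diagonal] at hDD'
      have h := congrFun (Matrix.diagonal_injective hDD') i
      have h' : μ i * μ i = μ i := by exact_mod_cast h
      have : μ i * (μ i - 1) = 0 := by ring_nf; linarith [h']
      rcases mul_eq_zero.mp this with h0 | h1
      · exact Or.inl h0
      · exact Or.inr (by linarith)
    have hex : ∃ j, μ j = 1 := by
      by_contra hcon
      push_neg at hcon
      apply hPrne
      have : ∀ i, μ i = 0 := fun i => (hμ01 i).resolve_right (hcon i)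
      rw [hPspec]
      have : Matrix.diagonal (fun i => (μ i : ℂ)) = 0 := by
        ext i j; by_cases hij : i = j <;> simp [Matrix.diagonal, hij, this]
      rw [this]; simp
    obtain ⟨j, hj⟩ := hex
    have htr : (Matrix.trace Pr).re = ∑ i, μ i := by
      rw [hPspec, Matrix.trace_mul_cycle, hVV', Matrix.one_mul, Matrix.trace_diagonal]
      simp
    rw [htr]
    calc (1:ℝ) = μ j := hj.symm
      _ ≤ ∑ i, μ i := Finset.single_le_sum
          (fun i _ => by rcases hμ01 i with h|h <;> simp [h]) (Finset.mem_univ j)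
  -- assemble
  have hexpand : (Pr * ((d:ℂ) • φ - (c : ℂ) • 1)).trace
      = (d:ℂ) * (Pr * φ).trace - (c:ℂ) * Pr.trace := by
    rw [Matrix.mul_sub, Matrix.trace_sub, Matrix.mul_smul, Matrix.trace_smul,
      Matrix.mul_smul, Matrix.mul_one, Matrix.trace_smul]
    simp [smul_eq_mul]
  rw [hexpand] at key
  have key' : 0 ≤ (d:ℝ) * (Matrix.trace (Pr * φ)).re - c * (Matrix.trace Pr).re := by
    have h := (Complex.le_def.mp key).1
    simpa [Complex.sub_re, Complex.mul_re] using h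
  have hmain : c ≤ (d:ℝ) * (Matrix.trace (Pr * φ)).re := by
    have hc0 : 0 < c := Real.exp_pos _
    nlinarith [htrPr, key', hc0]
  have hfin : Real.exp ℓ * ((d:ℝ) * (Matrix.trace (Pr * φ)).re) ≥ 1 := by
    have h1 : Real.exp ℓ * c = 1 := by
      rw [hc, ← Real.exp_add]; simp
    calc (1:ℝ) = Real.exp ℓ * c := h1.symm
      _ ≤ Real.exp ℓ * ((d:ℝ) * (Matrix.trace (Pr * φ)).re) := by
          exact mul_le_mul_of_nonneg_left hmain (Real.exp_pos ℓ).le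
  calc (1:ℝ) ≤ Real.exp ℓ * ((d:ℝ) * (Matrix.trace (Pr * φ)).re) := hfin
    _ = Real.exp ℓ * d * (Matrix.trace (Pr * φ)).re := by ring
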